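/- Suppose J consists exactly of the residue class of i modulo f, i.e. J = {i + kf : k ∈ ℤ}, and r_i = 1. Then ξ_i ≥ p. -/

import Mathlib

lemma geom_aux (p : ℤ) (hp : 2 ≤ p) :
    ∀ n : ℕ, (∑ j ∈ Finset.range n, p ^ (n + 1 - j)) ≤ 2 * p ^ (n + 1) - p := by
  intro n
  induction n with
  | zero =>
    simp
    nlinarith [pow_pos (by linarith : (0:ℤ) < p) 1]
  | succ n ih =>
    rw [Finset.sum_range_succ']
    have h1 : ∀ j ∈ Finset.range n, p ^ (n + 1 + 1 - (j + 1)) = p ^ (n + 1 - j) := by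
      intro j hj
      congr 1
      omega
    rw [Finset.sum_congr rfl h1]
    have hs : (n + 1 + 1 - 0 : ℕ) = n + 2 := by omega
    rw [hs]
    have hpow : 2 * p ^ (n + 1) ≤ p ^ (n + 2) := by
      have : p ^ (n + 2) = p * p ^ (n + 1) := by ring
      rw [this]
      have h0 : (0:ℤ) ≤ p ^ (n + 1) := pow_nonneg (by linarith) _
      nlinarith
    have : (n + 1 + 1 : ℕ) = n + 2 := by omega
    rw [this]
    linarith

lemma sum_aux (p : ℤ) (hp : 2 ≤ p) :
    ∀ (n : ℕ) (a : ℕ → ℤ), (∀ j, 1 ≤ a j) → (∀ j, a j ≤ p) →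
    (∀ t, t < n → (∀ j, j < t → a j = p - 1) → a t ≤ p - 1) →
    (∑ j ∈ Finset.range n, a j * p ^ (n - j)) ≤ p ^ (n + 1) - p := by
  intro n
  induction n with
  | zero =>
    intro a _ _ _
    simp
  | succ n ih =>
    intro a h1 h2 h3
    rw [Finset.sum_range_succ']
    have hsh : ∀ j ∈ Finset.range n, a (j + 1) * p ^ (n + 1 - (j + 1)) = a (j + 1) * p ^ (n - j) := by
      intro j hj
      congr 2
      omega
    rw [Finset.sum_congr rfl hsh]
    have hz : (n + 1 - 0 : ℕ) = n + 1 := by omega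
    rw [hz]
    have ha0le : a 0 ≤ p - 1 := h3 0 (by omega) (by intro j hj; omega)
    by_cases h0 : a 0 = p - 1
    · have htail := ih (fun j => a (j + 1)) (fun j => h1 _) (fun j => h2 _) ?_
      · have : p ^ (n + 2) = p * p ^ (n + 1) := by ring
        nlinarith [pow_nonneg (by linarith : (0:ℤ) ≤ p) (n + 1)]
      · intro t ht hprev
        apply h3 (t + 1) (by omega)
        intro j hj
        rcases j with _ | j'
        · exact h0
        · exact hprev j' (by omega)
    · have ha0 : a 0 ≤ p - 2 := by omega
      have htail : (∑ j ∈ Finset.range n, a (j + 1) * p ^ (n - j))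
          ≤ ∑ j ∈ Finset.range n, p ^ (n + 1 - j) := by
        apply Finset.sum_le_sum
        intro j hj
        have hj' := Finset.mem_range.1 hj
        have he : (n + 1 - j : ℕ) = (n - j) + 1 := by omega
        rw [he, pow_succ]
        have h0' : (0:ℤ) ≤ p ^ (n - j) := pow_nonneg (by linarith) _
        nlinarith [h2 (j + 1), h1 (j + 1)]
      have hg := geom_aux p hp n
      have hpk : (0:ℤ) ≤ p ^ (n + 1) := pow_nonneg (by linarith) _
      have hmul : a 0 * p ^ (n + 1) ≤ (p - 2) * p ^ (n + 1) :=
        mul_le_mul_of_nonneg_right ha0 hpk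
      have : p ^ (n + 2) = p * p ^ (n + 1) := by ring
      nlinarith

open scoped Classical in
/-- Suppose `J` is exactly the residue class of `i` modulo `f`, i.e.
`J = {i + k f : k ∈ ℤ}`, and `r_i = 1`. Then `ξ_i ≥ p`. -/
theorem stmt_13 (p f : ℕ) (hp : p.Prime) (hf : 1 ≤ f)
    (r : ℤ → ℤ) (hr_per : ∀ i : ℤ, r (i + f) = r i)
    (hr_lb : ∀ i : ℤ, 1 ≤ r i) (hr_ub : ∀ i : ℤ, r i ≤ p)
    (J : Set ℤ) (hJ_per : ∀ i : ℤ, i ∈ J ↔ i + f ∈ J)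
    (xi : ℤ → ℤ)
    (hxi : ∀ i : ℤ, xi i =
      (∑ j ∈ Finset.range f,
        (if (i + j + 1 : ℤ) ∈ J then (1 : ℤ) else -1) * r (i + j + 1) * (p : ℤ) ^ (f - 1 - j))
      + (if i ∈ J then r i * ((p : ℤ) ^ f - 1) else 0))
    (hmax₁ : ∀ i j : ℤ, j < i → r j = 1 → (∀ k : ℤ, j < k → k < i → r k = p - 1) →
      r i = p → (∀ k : ℤ, j < k → k ≤ i → k ∉ J) → j ∉ J)
    (hmax₂ : ((∀ i : ℤ, r i = p - 1) ∨ (p = 2 ∧ ∀ i : ℤ, r i = 2)) → J.Nonempty)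
    (hJ_ne_univ : (∀ i : ℤ, r i = p) → J ≠ Set.univ)
    (i : ℤ) (hJi : ∀ k : ℤ, k ∈ J ↔ ∃ m : ℤ, k = i + m * f)
    (hri : r i = 1) :
    (p : ℤ) ≤ xi i := by
  have hp2 : (2:ℤ) ≤ (p:ℤ) := by exact_mod_cast hp.two_le
  have hfz : (0:ℤ) < (f:ℤ) := by exact_mod_cast hf
  have hiJ : i ∈ J := (hJi i).2 ⟨0, by ring⟩
  have hifJ : i + (f:ℤ) ∈ J := (hJi _).2 ⟨1, by ring⟩
  have hnotJ : ∀ k : ℤ, i < k → k < i + (f:ℤ) → k ∉ J := by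
    intro k h1 h2 hk
    obtain ⟨m, hm⟩ := (hJi k).1 hk
    have h3 : 0 < m * (f:ℤ) := by omega
    have h4 : m * (f:ℤ) < (f:ℤ) := by omega
    rcases le_or_gt m 0 with h | h
    · nlinarith
    · have hm1 : 1 ≤ m := h
      nlinarith
  obtain ⟨n, rfl⟩ : ∃ n, f = n + 1 := ⟨f - 1, by omega⟩
  -- constraint from maximality
  have hcon : ∀ t, t < n → (∀ j, j < t → r (i + j + 1) = (p:ℤ) - 1) →
      r (i + t + 1) ≤ (p:ℤ) - 1 := by
    intro t ht hprev
    by_contra hgt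
    push_neg at hgt
    have hrt : r (i + t + 1) = p := by
      have := hr_ub (i + t + 1)
      omega
    have htc : ((t:ℤ)) < (n:ℤ) := by exact_mod_cast ht
    have htn : (0:ℤ) ≤ (t:ℤ) := Int.natCast_nonneg t
    have hmid : ∀ k : ℤ, i < k → k < i + t + 1 → r k = (p:ℤ) - 1 := by
      intro k hk1 hk2
      have hnn : 0 ≤ k - i - 1 := by omega
      set s := (k - i - 1).toNat with hs
      have hsz : (s:ℤ) = k - i - 1 := Int.toNat_of_nonneg hnn
      have hst : s < t := by
        have : (s:ℤ) < (t:ℤ) := by omega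
        exact_mod_cast this
      have hk : i + (s:ℤ) + 1 = k := by omega
      rw [← hk]
      exact hprev s hst
    have hnJ' : ∀ k : ℤ, i < k → k ≤ i + t + 1 → k ∉ J := by
      intro k hk1 hk2
      apply hnotJ k hk1
      have : ((n:ℕ) + 1 : ℕ) = n + 1 := rfl
      push_cast
      omega
    exact hmax₁ (i + t + 1) i (by omega) hri hmid hrt hnJ' hiJ
  have hx := hxi i
  rw [Finset.sum_range_succ] at hx
  have hterm : ∀ j ∈ Finset.range n,
      (if (i + j + 1 : ℤ) ∈ J then (1:ℤ) else -1) * r (i + j + 1) * (p:ℤ) ^ (n + 1 - 1 - j)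
        = -(r (i + j + 1) * (p:ℤ) ^ (n - j)) := by
    intro j hj
    have hj' : (j:ℤ) < (n:ℤ) := by exact_mod_cast Finset.mem_range.1 hj
    have hjn : (0:ℤ) ≤ (j:ℤ) := Int.natCast_nonneg j
    have hnot : (i + j + 1 : ℤ) ∉ J := by
      apply hnotJ _ (by omega)
      push_cast
      omega
    rw [if_neg hnot]
    have he : (n + 1 - 1 - j : ℕ) = n - j := by omega
    rw [he]
    ring
  rw [Finset.sum_congr rfl hterm] at hx
  have hlast : (if (i + (n:ℤ) + 1) ∈ J then (1:ℤ) else -1) * r (i + n + 1)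
      * (p:ℤ) ^ (n + 1 - 1 - n) = 1 := by
    have he : i + (n:ℤ) + 1 = i + ((n : ℕ) + 1 : ℕ) := by push_cast; ring
    have h1 : (i + (n:ℤ) + 1) ∈ J := by rw [he]; exact_mod_cast hifJ
    have h2 : r (i + (n:ℤ) + 1) = 1 := by
      rw [he]
      have := hr_per i
      rw [show ((((n:ℕ) + 1 : ℕ)):ℤ) = (((n+1 : ℕ)):ℤ) from rfl]
      exact this.trans hri
    have he2 : (n + 1 - 1 - n : ℕ) = 0 := by omega
    rw [he2, if_pos h1, h2]
    norm_num
  rw [hlast, if_pos hiJ, hri] at hx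
  have hS := sum_aux (p:ℤ) hp2 n (fun j => r (i + j + 1)) (fun j => hr_lb _)
      (fun j => hr_ub _) hcon
  have hneg : (∑ j ∈ Finset.range n, -(r (i + j + 1) * (p:ℤ) ^ (n - j)))
      = -∑ j ∈ Finset.range n, r (i + j + 1) * (p:ℤ) ^ (n - j) := by
    rw [Finset.sum_neg_distrib]
  rw [hneg] at hx
  rw [hx]
  linarith
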